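/- Let g : ℝⁿ → ℝ be differentiable with L-Lipschitz gradient and h₁ : ℝⁿ → ℝ ∪ {+∞} a proper lower semicontinuous convex function whose subdifferential is uniformly bounded: there is c̄ > 0 with ‖v‖ ≤ c̄ for every v ∈ ∂h₁(x) and every x in the effective domain of h₁. Let x, x′ ∈ ℝⁿ, s = x′ − x ≠ 0, z = (∇g(x′) − ∇g(x)) + νs with 0 ≤ ν ≤ ν̄, sᵀz ≥ ν̲‖s‖² with ν̲ > 0, γ ∈ [γ̲, γ̄] with 0 < γ̲ ≤ γ̄, τ ∈ [τ̲, τ̄] with 0 < τ̲ ≤ τ̄, and set u₁ = √(γ/(sᵀz)) z and u₂ = (√τ/‖s‖) s; assume u₁ and u₂ are linearly independent. For any x̄ ∈ ℝⁿ define ζ(α) = x̄ − (α₁/τ)u₁ + α₂(τI + u₁u₁ᵀ)⁻¹u₂, 𝓛(α) = ( u₁ᵀ(x̄ + α₂(τI + u₁u₁ᵀ)⁻¹u₂ − Prox_{(1/τ)h₁}(ζ(α))) + α₁ , u₂ᵀ(x̄ − Prox_{(1/τ)h₁}(ζ(α))) + α₂ ), and Ψ(α) = ½‖𝓛(α)‖².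 Then Ψ is coercive: Ψ(α) → ∞ as ‖α‖ → ∞. -/

import Mathlib

open Matrix Filter Topology RealInnerProductSpace

noncomputable section

/-- `n`-dimensional Euclidean space. -/
abbrev Euc (n : ℕ) := EuclideanSpace ℝ (Fin n)

/-- `v` is a subgradient of the extended-real-valued convex function `φ` at `x`. -/
def ESubgradAt {n : ℕ} (φ : Euc n → EReal) (v x : Euc n) : Prop :=
  ∀ y : Euc n, φ x + ((⟪v, y - x⟫ : ℝ) : EReal) ≤ φ y

/-- `v` is a subgradient of the real-valued convex function `φ` at `x`. -/
def RSubgradAt {n : ℕ} (φ : Euc n → ℝ) (v x : Euc n) : Prop :=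
  ∀ y : Euc n, φ x + ⟪v, y - x⟫ ≤ φ y

/-- Convexity of an extended-real-valued function. -/
def EConvexF {n : ℕ} (φ : Euc n → EReal) : Prop :=
  ∀ x y : Euc n, ∀ a b : ℝ, 0 ≤ a → 0 ≤ b → a + b = 1 →
    φ (a • x + b • y) ≤ (a : EReal) * φ x + (b : EReal) * φ y

/-- Properness of an extended-real-valued function: never `⊥` and finite somewhere. -/
def ProperF {n : ℕ} (φ : Euc n → EReal) : Prop :=
  (∀ x, φ x ≠ ⊥) ∧ (∃ x, φ x ≠ ⊤)

/-- The quadratic form `uᵀ B u`. -/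
def quadF {n : ℕ} (B : Matrix (Fin n) (Fin n) ℝ) (u : Euc n) : ℝ :=
  ⟪u, (Matrix.toEuclideanLin B) u⟫

/-- The scaled norm `‖u‖_B = √(uᵀ B u)`. -/
def MNorm {n : ℕ} (B : Matrix (Fin n) (Fin n) ℝ) (u : Euc n) : ℝ :=
  Real.sqrt (quadF B u)

/-- The objective `f = g + h₁ - h₂`. -/
def fObj {n : ℕ} (g : Euc n → ℝ) (h₁ : Euc n → EReal) (h₂ : Euc n → ℝ) (x : Euc n) : EReal :=
  (g x : EReal) + h₁ x - (h₂ x : EReal)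

/-- `p` is the proximal point `Prox_{(1/τ)h₁}(y)`, i.e. the minimizer of
`(1/τ)h₁(·) + ½‖· - y‖²`. -/
def IsProxPt {n : ℕ} (τ : ℝ) (h₁ : Euc n → EReal) (y p : Euc n) : Prop :=
  ∀ w : Euc n, ((τ⁻¹ : ℝ) : EReal) * h₁ p + ((‖p - y‖ ^ 2 / 2 : ℝ) : EReal) ≤
    ((τ⁻¹ : ℝ) : EReal) * h₁ w + ((‖w - y‖ ^ 2 / 2 : ℝ) : EReal)

/-- The matrix `τI + u₁u₁ᵀ`. -/
def Amat {n : ℕ} (τ : ℝ) (u₁ : Euc n) : Matrix (Fin n) (Fin n) ℝ :=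
  τ • (1 : Matrix (Fin n) (Fin n) ℝ) + Matrix.vecMulVec (u₁ : Fin n → ℝ) (u₁ : Fin n → ℝ)

/-- The matrix `B = τI + u₁u₁ᵀ - u₂u₂ᵀ`. -/
def Bprox {n : ℕ} (τ : ℝ) (u₁ u₂ : Euc n) : Matrix (Fin n) (Fin n) ℝ :=
  Amat τ u₁ - Matrix.vecMulVec (u₂ : Fin n → ℝ) (u₂ : Fin n → ℝ)

/-- `ζ(α) = x̄ - (α₁/τ)u₁ + α₂(τI + u₁u₁ᵀ)⁻¹u₂`. -/
def zetaMap {n : ℕ} (τ : ℝ) (u₁ u₂ xb : Euc n) (α : ℝ × ℝ) : Euc n :=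
  xb - (α.1 / τ) • u₁ + α.2 • (Matrix.toEuclideanLin (Amat τ u₁)⁻¹) u₂

/-- The semi-smooth map `𝓛 : ℝ² → ℝ²`, where `P = Prox_{(1/τ)h₁}`. -/
def Lmap {n : ℕ} (τ : ℝ) (u₁ u₂ xb : Euc n) (P : Euc n → Euc n) (α : ℝ × ℝ) : ℝ × ℝ :=
  (⟪u₁, xb + α.2 • (Matrix.toEuclideanLin (Amat τ u₁)⁻¹) u₂ - P (zetaMap τ u₁ u₂ xb α)⟫ + α.1,
   ⟪u₂, xb - P (zetaMap τ u₁ u₂ xb α)⟫ + α.2)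

/-- `p` is the scaled proximal point `Prox_{h₁}^{B}(y)`, i.e. the minimizer of
`h₁(·) + ½‖· - y‖_B²`. -/
def IsScaledProxPt {n : ℕ} (B : Matrix (Fin n) (Fin n) ℝ) (h₁ : Euc n → EReal)
    (y p : Euc n) : Prop :=
  ∀ w : Euc n, h₁ p + ((quadF B (p - y) / 2 : ℝ) : EReal) ≤
    h₁ w + ((quadF B (w - y) / 2 : ℝ) : EReal)


section AuxLemmas

lemma prox_ne_top {n : ℕ} {τ : ℝ} (hτ : 0 < τ) {h₁ : Euc n → EReal}
    (hprop : ProperF h₁) {y p : Euc n} (hp : IsProxPt τ h₁ y p) : h₁ p ≠ ⊤ := by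
  obtain ⟨x₀, hx₀⟩ := hprop.2
  intro htop
  have h := hp x₀
  rw [htop] at h
  have hpos : (0:ℝ) < τ⁻¹ := inv_pos.2 hτ
  have h1 : ((τ⁻¹ : ℝ) : EReal) * (⊤ : EReal) = ⊤ := by
    rw [EReal.mul_top_of_pos]
    exact_mod_cast hpos
  rw [h1, EReal.top_add_coe] at h
  have hbot := hprop.1 x₀
  lift h₁ x₀ to ℝ using ⟨hx₀, hbot⟩ with r hr
  have : ((τ⁻¹ : ℝ) : EReal) * (r : EReal) + ((‖x₀ - y‖ ^ 2 / 2 : ℝ) : EReal) =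
      ((τ⁻¹ * r + ‖x₀ - y‖ ^ 2 / 2 : ℝ) : EReal) := by
    rw [← EReal.coe_mul, ← EReal.coe_add]
  rw [this] at h
  exact (EReal.coe_ne_top _) (top_le_iff.mp h)

lemma prox_subgrad {n : ℕ} {τ : ℝ} (hτ : 0 < τ) {h₁ : Euc n → EReal}
    (hprop : ProperF h₁) (hconv : EConvexF h₁) {y p : Euc n} (hp : IsProxPt τ h₁ y p) :
    ESubgradAt h₁ (τ • (y - p)) p := by
  have hpt : h₁ p ≠ ⊤ := prox_ne_top hτ hprop hp
  intro w
  by_cases hwt : h₁ w = ⊤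
  · rw [hwt]; exact le_top
  have hpb := hprop.1 p
  have hwb := hprop.1 w
  lift h₁ p to ℝ using ⟨hpt, hpb⟩ with hpv hhp
  lift h₁ w to ℝ using ⟨hwt, hwb⟩ with hwv hhw
  rw [← EReal.coe_add, EReal.coe_le_coe_iff]
  have key : ∀ t : ℝ, 0 < t → t ≤ 1 →
      τ⁻¹ * (hpv - hwv) ≤ ⟪p - y, w - p⟫ + t / 2 * ‖w - p‖ ^ 2 := by
    intro t ht0 ht1
    set wt : Euc n := (1 - t) • p + t • w with hwtdef
    have hcv := hconv p w (1 - t) t (by linarith) (le_of_lt ht0) (by ring)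
    rw [← hhp, ← hhw] at hcv
    have hcvr : h₁ wt ≤ (((1 - t) * hpv + t * hwv : ℝ) : EReal) := by
      calc h₁ wt ≤ ((1-t : ℝ) : EReal) * (hpv : EReal) + ((t:ℝ) : EReal) * (hwv : EReal) := hcv
        _ = _ := by rw [← EReal.coe_mul, ← EReal.coe_mul, ← EReal.coe_add]
    have hwtt : h₁ wt ≠ ⊤ := fun h => by
      rw [h] at hcvr; exact absurd hcvr (not_le.mpr (EReal.coe_lt_top _))
    have hwtb := hprop.1 wt
    lift h₁ wt to ℝ using ⟨hwtt, hwtb⟩ with hwtv hhwt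
    rw [EReal.coe_le_coe_iff] at hcvr
    have hprox := hp wt
    rw [← hhp, ← hhwt, ← EReal.coe_mul, ← EReal.coe_mul, ← EReal.coe_add, ← EReal.coe_add,
      EReal.coe_le_coe_iff] at hprox
    have hwty : wt - y = (p - y) + t • (w - p) := by
      show (1 - t) • p + t • w - y = (p - y) + t • (w - p); module
    have hnorm : ‖wt - y‖ ^ 2 = ‖p - y‖ ^ 2 + 2 * (t * ⟪p - y, w - p⟫) + t^2 * ‖w - p‖ ^ 2 := by
      rw [hwty, @norm_add_sq_real, real_inner_smul_right, norm_smul,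
        Real.norm_eq_abs, abs_of_pos ht0, mul_pow]
      try ring
    have h2 : τ⁻¹ * hpv ≤ τ⁻¹ * ((1 - t) * hpv + t * hwv) + t * ⟪p - y, w - p⟫ + t^2/2 * ‖w - p‖ ^ 2 := by
      have := mul_le_mul_of_nonneg_left hcvr (le_of_lt (inv_pos.2 hτ))
      nlinarith [hprox, hnorm]
    have h3 : t * (τ⁻¹ * (hpv - hwv)) ≤ t * (⟪p - y, w - p⟫ + t / 2 * ‖w - p‖ ^ 2) := by
      nlinarith [h2]
    have := le_of_mul_le_mul_left (by linarith [h3] : t * (τ⁻¹ * (hpv - hwv)) ≤ t * (⟪p - y, w - p⟫ + t / 2 * ‖w - p‖ ^ 2)) ht0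
    linarith [this]
  have lim : τ⁻¹ * (hpv - hwv) ≤ ⟪p - y, w - p⟫ := by
    by_contra hcon
    push_neg at hcon
    have hε0 : 0 < τ⁻¹ * (hpv - hwv) - ⟪p - y, w - p⟫ := by linarith
    have hd : (0:ℝ) < ‖w - p‖ ^ 2 + 1 := by positivity
    obtain ⟨ε, hε⟩ : ∃ ε : ℝ, ε = τ⁻¹ * (hpv - hwv) - ⟪p - y, w - p⟫ := ⟨_, rfl⟩
    have hε0' : 0 < ε := hε ▸ hε0
    have ht0 : 0 < min 1 (ε / (‖w - p‖ ^ 2 + 1)) := lt_min one_pos (div_pos hε0' hd)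
    have ht1 : min 1 (ε / (‖w - p‖ ^ 2 + 1)) ≤ 1 := min_le_left _ _
    have h4 := key _ ht0 ht1
    have h6 : min 1 (ε / (‖w - p‖ ^ 2 + 1)) ≤ ε / (‖w - p‖ ^ 2 + 1) := min_le_right _ _
    have h7 : min 1 (ε / (‖w - p‖ ^ 2 + 1)) * ‖w - p‖ ^ 2 ≤ ε / (‖w - p‖ ^ 2 + 1) * (‖w - p‖ ^ 2 + 1) := by
      nlinarith [sq_nonneg ‖w - p‖, div_pos hε0' hd]
    rw [div_mul_cancel₀ _ (ne_of_gt hd)] at h7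
    linarith
  have hsm : ⟪τ • (y - p), w - p⟫ = τ * ⟪y - p, w - p⟫ := real_inner_smul_left _ _ _
  have hip : ⟪p - y, w - p⟫ = - ⟪y - p, w - p⟫ := by
    rw [← inner_neg_left]; congr 1; abel
  have hmul := mul_le_mul_of_nonneg_left lim (le_of_lt hτ)
  rw [← mul_assoc, mul_inv_cancel₀ (ne_of_gt hτ), one_mul] at hmul
  rw [hsm]
  nlinarith [hmul, hip]

lemma vecMulVec_mulVec' {n : ℕ} (a b v : Fin n → ℝ) :
    Matrix.vecMulVec a b *ᵥ v = (b ⬝ᵥ v) • a := by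
  funext i
  simp only [Matrix.mulVec, Matrix.vecMulVec_apply, dotProduct, Pi.smul_apply,
    smul_eq_mul, Finset.mul_sum]
  rw [Finset.sum_mul]
  apply Finset.sum_congr rfl
  intros; ring

lemma Amat_mulVec' {n : ℕ} (τ : ℝ) (u v : Fin n → ℝ) :
    (τ • (1 : Matrix (Fin n) (Fin n) ℝ) + Matrix.vecMulVec u u) *ᵥ v
      = τ • v + (u ⬝ᵥ v) • u := by
  rw [Matrix.add_mulVec, Matrix.smul_mulVec, Matrix.one_mulVec, vecMulVec_mulVec']

lemma inner_eq_dot {n : ℕ} (a b : Euc n) : ⟪a, b⟫ = (a : Fin n → ℝ) ⬝ᵥ (b : Fin n → ℝ) := by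
  simp [PiLp.inner_apply, dotProduct, mul_comm]

lemma Amat_det_isUnit {n : ℕ} {τ : ℝ} (hτ : 0 < τ) (u₁ : Euc n) :
    IsUnit (Amat τ u₁).det := by
  rw [isUnit_iff_ne_zero]
  intro hdet
  obtain ⟨v, hv0, hv⟩ := (Matrix.exists_mulVec_eq_zero_iff).2 hdet
  rw [Amat.eq_1, Amat_mulVec'] at hv
  have hdot := congrArg (fun w => v ⬝ᵥ w) hv
  simp only [dotProduct_add, dotProduct_smul, smul_eq_mul,
    dotProduct_zero] at hdot
  have hvv : (0:ℝ) ≤ v ⬝ᵥ v := Finset.sum_nonneg fun i _ => mul_self_nonneg _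
  have hsq : v ⬝ᵥ (u₁ : Fin n → ℝ) = (u₁ : Fin n → ℝ) ⬝ᵥ v := dotProduct_comm _ _
  rw [hsq] at hdot
  have h9 : τ * (v ⬝ᵥ v) ≤ τ * 0 := by nlinarith [mul_self_nonneg ((u₁ : Fin n → ℝ) ⬝ᵥ v)]
  have hzero : v ⬝ᵥ v = 0 := le_antisymm (le_of_mul_le_mul_left h9 hτ) hvv
  apply hv0
  funext i
  have := (Finset.sum_eq_zero_iff_of_nonneg (fun i _ => mul_self_nonneg (v i))).1 hzero i
    (Finset.mem_univ i)
  simpa using mul_self_eq_zero.mp this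

lemma Amat_inv_solves {n : ℕ} {τ : ℝ} (hτ : 0 < τ) (u₁ u₂ : Euc n) :
    τ • (Matrix.toEuclideanLin (Amat τ u₁)⁻¹ u₂)
      + ⟪u₁, Matrix.toEuclideanLin (Amat τ u₁)⁻¹ u₂⟫ • u₁ = u₂ := by
  set w := Matrix.toEuclideanLin (Amat τ u₁)⁻¹ u₂ with hw
  have h1 : (Amat τ u₁) *ᵥ ((Amat τ u₁)⁻¹ *ᵥ (u₂ : Fin n → ℝ)) = (u₂ : Fin n → ℝ) := by
    rw [Matrix.mulVec_mulVec, Matrix.mul_nonsing_inv _ (Amat_det_isUnit hτ u₁),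
      Matrix.one_mulVec]
  have hw' : (w : Fin n → ℝ) = (Amat τ u₁)⁻¹ *ᵥ (u₂ : Fin n → ℝ) := rfl
  rw [← hw', Amat.eq_1, Amat_mulVec'] at h1
  have final : τ • (w : Fin n → ℝ) + ⟪u₁, w⟫ • (u₁ : Fin n → ℝ) = (u₂ : Fin n → ℝ) := by
    rw [inner_eq_dot]; exact h1
  ext i; have := congrFun final i; simpa using this

lemma abs_sub_abs_le_abs_add' (X Y : ℝ) : |X| - |Y| ≤ |X + Y| := by
  have h := abs_add_le (X + Y) (-Y)
  rw [abs_neg] at h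
  simp only [add_neg_cancel_right] at h
  linarith

end AuxLemmas

set_option maxHeartbeats 1000000 in
/-- coercivity of the merit function `Ψ(α) = ½‖𝓛(α)‖²` for the BFGS
choice `u₁ = √(γ/(sᵀz)) z`, `u₂ = (√τ/‖s‖) s`, when the subdifferential of `h₁` is
uniformly bounded on its effective domain. -/
theorem merit_function_coercive
    {n : ℕ} (L cbar νlo νhi γlo γhi τlo τhi ν γ τ : ℝ)
    (g : Euc n → ℝ) (g' : Euc n → Euc n)
    (h₁ : Euc n → EReal) (P : Euc n → Euc n)
    (x x' s z u₁ u₂ xb : Euc n)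
    (hL : 0 ≤ L)
    (hg : ∀ y : Euc n, HasGradientAt g (g' y) y)
    (hLip : ∀ u v : Euc n, ‖g' u - g' v‖ ≤ L * ‖u - v‖)
    (hprop : ProperF h₁) (hlsc : LowerSemicontinuous h₁) (hconv : EConvexF h₁)
    (hcbar : 0 < cbar)
    (hbddsub : ∀ y : Euc n, h₁ y ≠ ⊤ → ∀ v : Euc n, ESubgradAt h₁ v y → ‖v‖ ≤ cbar)
    (hs : s = x' - x) (hs0 : s ≠ 0)
    (hz : z = (g' x' - g' x) + ν • s)
    (hν0 : 0 ≤ ν) (hνhi : ν ≤ νhi)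
    (hνlo : 0 < νlo)
    (hcurv : νlo * ‖s‖ ^ 2 ≤ ⟪s, z⟫)
    (hγlo : 0 < γlo) (hγ1 : γlo ≤ γ) (hγ2 : γ ≤ γhi)
    (hτlo : 0 < τlo) (hτ1 : τlo ≤ τ) (hτ2 : τ ≤ τhi)
    (hu₁ : u₁ = Real.sqrt (γ / (⟪s, z⟫ : ℝ)) • z)
    (hu₂ : u₂ = (Real.sqrt τ / ‖s‖) • s)
    (hind : LinearIndependent ℝ ![u₁, u₂])
    (hP : ∀ y : Euc n, IsProxPt τ h₁ y (P y)) :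
    ∀ C : ℝ, ∃ R : ℝ, ∀ α : ℝ × ℝ, R ≤ ‖α‖ →
      C ≤ ((Lmap τ u₁ u₂ xb P α).1 ^ 2 + (Lmap τ u₁ u₂ xb P α).2 ^ 2) / 2 := by
  intro C
  have hτ : 0 < τ := lt_of_lt_of_le hτlo hτ1
  have hsn : 0 < ‖s‖ := norm_pos_iff.mpr hs0
  have hsz : 0 < ⟪s, z⟫ := lt_of_lt_of_le (by positivity) hcurv
  have hγ : 0 < γ := lt_of_lt_of_le hγlo hγ1
  have hzs : (0:ℝ) < ⟪z, s⟫ := by rw [real_inner_comm]; exact hsz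
  have hq : 0 < ⟪u₁, u₂⟫ := by
    rw [hu₁, hu₂, real_inner_smul_left, real_inner_smul_right]
    have h1 : 0 < Real.sqrt (γ / ⟪s, z⟫) := Real.sqrt_pos.2 (div_pos hγ hsz)
    have h2 : 0 < Real.sqrt τ := Real.sqrt_pos.2 hτ
    exact mul_pos h1 (mul_pos (div_pos h2 hsn) hzs)
  have hu2n : ‖u₂‖ ^ 2 = τ := by
    rw [hu₂, norm_smul, Real.norm_eq_abs, abs_of_nonneg (by positivity), mul_pow, div_pow,
      Real.sq_sqrt (le_of_lt hτ), div_mul_cancel₀ _ (by positivity : ‖s‖ ^ 2 ≠ 0)]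
  obtain ⟨w, hwdef⟩ : ∃ w : Euc n, w = Matrix.toEuclideanLin (Amat τ u₁)⁻¹ u₂ := ⟨_, rfl⟩
  have hAw : τ • w + ⟪u₁, w⟫ • u₁ = u₂ := by rw [hwdef]; exact Amat_inv_solves hτ u₁ u₂
  have hA1 : ⟪u₁, u₂⟫ = τ * ⟪u₁, w⟫ + ⟪u₁, w⟫ * ‖u₁‖ ^ 2 := by
    have h0 : ⟪u₁, τ • w + ⟪u₁, w⟫ • u₁⟫ = τ * ⟪u₁, w⟫ + ⟪u₁, w⟫ * ⟪u₁, u₁⟫ := by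
      rw [inner_add_right, real_inner_smul_right, real_inner_smul_right]
    rw [hAw, real_inner_self_eq_norm_sq] at h0
    exact h0
  have hA2 : τ = τ * ⟪u₂, w⟫ + ⟪u₁, w⟫ * ⟪u₁, u₂⟫ := by
    have h0 : ⟪u₂, τ • w + ⟪u₁, w⟫ • u₁⟫ = τ * ⟪u₂, w⟫ + ⟪u₁, w⟫ * ⟪u₂, u₁⟫ := by
      rw [inner_add_right, real_inner_smul_right, real_inner_smul_right]
    rw [hAw] at h0
    have h0' : ‖u₂‖ ^ 2 = τ * ⟪u₂, w⟫ + ⟪u₁, w⟫ * ⟪u₁, u₂⟫ := by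
      rw [← real_inner_self_eq_norm_sq, h0, real_inner_comm u₂ u₁]
    linarith [h0', hu2n]
  have h1w : 0 < ⟪u₁, w⟫ := by
    by_contra hcon
    push_neg at hcon
    have h5 : τ * ⟪u₁, w⟫ ≤ 0 := mul_nonpos_of_nonneg_of_nonpos (le_of_lt hτ) hcon
    have h6 : ⟪u₁, w⟫ * ‖u₁‖ ^ 2 ≤ 0 := mul_nonpos_of_nonpos_of_nonneg hcon (sq_nonneg _)
    linarith [hA1, hq]
  have hc : 0 < 1 - ⟪u₂, w⟫ := by
    by_contra hcon
    push_neg at hcon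
    have h5 : τ * (1 - ⟪u₂, w⟫) = ⟪u₁, w⟫ * ⟪u₁, u₂⟫ := by linear_combination hA2
    have h6 : 0 < ⟪u₁, w⟫ * ⟪u₁, u₂⟫ := mul_pos h1w hq
    have h7 := mul_nonpos_of_nonneg_of_nonpos (le_of_lt hτ) hcon
    linarith [h5, h6, h7]
  have hE : ∀ y : Euc n, ‖P y - y‖ ≤ cbar / τ := by
    intro y
    have hsub := prox_subgrad hτ hprop hconv (hP y)
    have hne := prox_ne_top hτ hprop (hP y)
    have hb := hbddsub (P y) hne _ hsub
    rw [norm_smul, Real.norm_eq_abs, abs_of_pos hτ, norm_sub_rev] at hb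
    rw [le_div_iff₀ hτ]
    linarith [hb]
  have hL1 : ∀ α : ℝ × ℝ, (Lmap τ u₁ u₂ xb P α).1
      = α.1 * (1 + ‖u₁‖ ^ 2 / τ)
        - ⟪u₁, P (zetaMap τ u₁ u₂ xb α) - zetaMap τ u₁ u₂ xb α⟫ := by
    intro α
    have htop : (Lmap τ u₁ u₂ xb P α).1
        = ⟪u₁, xb + α.2 • w - P (zetaMap τ u₁ u₂ xb α)⟫ + α.1 := by
      simp only [Lmap, hwdef]
    have hvec : xb + α.2 • w - P (zetaMap τ u₁ u₂ xb α)
        = (α.1 / τ) • u₁ - (P (zetaMap τ u₁ u₂ xb α) - zetaMap τ u₁ u₂ xb α) := by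
      simp only [zetaMap, ← hwdef]
      module
    rw [htop, hvec, inner_sub_right, real_inner_smul_right, real_inner_self_eq_norm_sq]
    field_simp
    ring
  have hL2 : ∀ α : ℝ × ℝ, (Lmap τ u₁ u₂ xb P α).2
      = α.1 * (⟪u₁, u₂⟫ / τ) + α.2 * (1 - ⟪u₂, w⟫)
        - ⟪u₂, P (zetaMap τ u₁ u₂ xb α) - zetaMap τ u₁ u₂ xb α⟫ := by
    intro α
    have htop : (Lmap τ u₁ u₂ xb P α).2
        = ⟪u₂, xb - P (zetaMap τ u₁ u₂ xb α)⟫ + α.2 := by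
      simp only [Lmap, hwdef]
    have hvec : xb - P (zetaMap τ u₁ u₂ xb α)
        = (α.1 / τ) • u₁ - α.2 • w - (P (zetaMap τ u₁ u₂ xb α) - zetaMap τ u₁ u₂ xb α) := by
      simp only [zetaMap, ← hwdef]
      module
    rw [htop, hvec, inner_sub_right, inner_sub_right, real_inner_smul_right,
      real_inner_smul_right, real_inner_comm u₂ u₁]
    field_simp
    ring
  obtain ⟨a, ha⟩ : ∃ a : ℝ, a = 1 + ‖u₁‖ ^ 2 / τ := ⟨_, rfl⟩
  obtain ⟨b, hbdef⟩ : ∃ b : ℝ, b = ⟪u₁, u₂⟫ / τ := ⟨_, rfl⟩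
  obtain ⟨c, hcdef⟩ : ∃ c : ℝ, c = 1 - ⟪u₂, w⟫ := ⟨_, rfl⟩
  obtain ⟨K₁, hK₁⟩ : ∃ k : ℝ, k = ‖u₁‖ * (cbar / τ) := ⟨_, rfl⟩
  obtain ⟨K₂, hK₂⟩ : ∃ k : ℝ, k = ‖u₂‖ * (cbar / τ) := ⟨_, rfl⟩
  have ha1 : 1 ≤ a := by
    rw [ha]
    have h0 : 0 ≤ ‖u₁‖ ^ 2 / τ := by positivity
    linarith
  have ha0 : 0 < a := lt_of_lt_of_le one_pos ha1
  have hb0 : 0 < b := hbdef ▸ div_pos hq hτ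
  have hc0 : 0 < c := hcdef ▸ hc
  have hK₁0 : 0 ≤ K₁ := by rw [hK₁]; positivity
  have hK₂0 : 0 ≤ K₂ := by rw [hK₂]; positivity
  obtain ⟨D, hD⟩ : ∃ D : ℝ, D = Real.sqrt (max (2 * C) 0) := ⟨_, rfl⟩
  have hD0 : 0 ≤ D := hD ▸ Real.sqrt_nonneg _
  have hD2 : 2 * C ≤ D ^ 2 := by
    rw [hD, Real.sq_sqrt (le_max_right _ _)]; exact le_max_left _ _
  obtain ⟨T₁, hT₁⟩ : ∃ t : ℝ, t = (D + K₁) / a := ⟨_, rfl⟩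
  obtain ⟨T₂, hT₂⟩ : ∃ t : ℝ, t = (D + K₂ + b * T₁) / c := ⟨_, rfl⟩
  have hT₁0 : 0 ≤ T₁ := by rw [hT₁]; positivity
  have hT₂0 : 0 ≤ T₂ := by
    rw [hT₂]
    apply div_nonneg _ (le_of_lt hc0)
    nlinarith [mul_nonneg (le_of_lt hb0) hT₁0]
  have haT : a * T₁ = D + K₁ := by rw [hT₁]; field_simp
  have hcT : c * T₂ = D + K₂ + b * T₁ := by rw [hT₂]; field_simp
  refine ⟨max T₁ T₂ + 1, fun α hα => ?_⟩
  obtain ⟨r₁, hr₁d⟩ : ∃ r : ℝ,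
      r = ⟪u₁, P (zetaMap τ u₁ u₂ xb α) - zetaMap τ u₁ u₂ xb α⟫ := ⟨_, rfl⟩
  obtain ⟨r₂, hr₂d⟩ : ∃ r : ℝ,
      r = ⟪u₂, P (zetaMap τ u₁ u₂ xb α) - zetaMap τ u₁ u₂ xb α⟫ := ⟨_, rfl⟩
  have hr₁b : |r₁| ≤ K₁ := by
    rw [hr₁d, hK₁]
    calc |⟪u₁, P (zetaMap τ u₁ u₂ xb α) - zetaMap τ u₁ u₂ xb α⟫|
        ≤ ‖u₁‖ * ‖P (zetaMap τ u₁ u₂ xb α) - zetaMap τ u₁ u₂ xb α‖ :=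
          abs_real_inner_le_norm _ _
      _ ≤ ‖u₁‖ * (cbar / τ) := mul_le_mul_of_nonneg_left (hE _) (norm_nonneg _)
  have hr₂b : |r₂| ≤ K₂ := by
    rw [hr₂d, hK₂]
    calc |⟪u₂, P (zetaMap τ u₁ u₂ xb α) - zetaMap τ u₁ u₂ xb α⟫|
        ≤ ‖u₂‖ * ‖P (zetaMap τ u₁ u₂ xb α) - zetaMap τ u₁ u₂ xb α‖ :=
          abs_real_inner_le_norm _ _
      _ ≤ ‖u₂‖ * (cbar / τ) := mul_le_mul_of_nonneg_left (hE _) (norm_nonneg _)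
  have hnorma : ‖α‖ = max |α.1| |α.2| := by
    rw [Prod.norm_def, Real.norm_eq_abs, Real.norm_eq_abs]
  rw [hL1 α, hL2 α, ← ha, ← hbdef, ← hcdef, ← hr₁d, ← hr₂d]
  rcases le_or_gt T₁ |α.1| with h1 | h1
  · have h3 := abs_sub_abs_le_abs_add' (α.1 * a) (-r₁)
    rw [abs_neg] at h3
    have h6 : α.1 * a + -r₁ = α.1 * a - r₁ := by ring
    rw [h6] at h3
    have h4 : |α.1 * a| = |α.1| * a := by rw [abs_mul, abs_of_pos ha0]
    have h5 : a * T₁ ≤ a * |α.1| := mul_le_mul_of_nonneg_left h1 (le_of_lt ha0)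
    have h2 : D ≤ |α.1 * a - r₁| := by
      rw [h4] at h3
      linarith [h3, h5, haT, hr₁b]
    have h7 := pow_le_pow_left₀ hD0 h2 2
    rw [sq_abs] at h7
    linarith [sq_nonneg (α.1 * b + α.2 * c - r₂), hD2, h7]
  · have h2 : T₂ ≤ |α.2| := by
      rcases le_total |α.1| |α.2| with h3 | h3
      · rw [hnorma, max_eq_right h3] at hα
        have := le_max_right T₁ T₂
        linarith
      · rw [hnorma, max_eq_left h3] at hα
        have := le_max_left T₁ T₂
        linarith
    have h3 := abs_sub_abs_le_abs_add' (α.2 * c) (α.1 * b + -r₂)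
    have h6 : α.2 * c + (α.1 * b + -r₂) = α.1 * b + α.2 * c - r₂ := by ring
    rw [h6] at h3
    have h4 : |α.2 * c| = |α.2| * c := by rw [abs_mul, abs_of_pos hc0]
    have h5 : |α.1 * b + -r₂| ≤ |α.1| * b + K₂ := by
      calc |α.1 * b + -r₂| ≤ |α.1 * b| + |(-r₂)| := abs_add_le _ _
        _ ≤ |α.1| * b + K₂ := by
            rw [abs_mul, abs_of_pos hb0, abs_neg]; linarith [hr₂b]
    have h7 : c * T₂ ≤ c * |α.2| := mul_le_mul_of_nonneg_left h2 (le_of_lt hc0)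
    have h8 : |α.1| * b ≤ T₁ * b := mul_le_mul_of_nonneg_right (le_of_lt h1) (le_of_lt hb0)
    have h9 : D ≤ |α.1 * b + α.2 * c - r₂| := by
      rw [h4] at h3
      linarith [h3, h5, h7, h8, hcT]
    have h10 := pow_le_pow_left₀ hD0 h9 2
    rw [sq_abs] at h10
    linarith [sq_nonneg (α.1 * a - r₁), hD2, h10]
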